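/- arXiv:2005.14563 — 5 statements merged into one kernel-verified Lean document; each statement's English description precedes it below -/
import Mathlib

section
/- Let Z be a Banach space and k > 0 an integer. If Z ≅ Z ⊕ F for every k-dimensional Banach space F (SUFDS_k), then for every k-dimensional subspace F ⊆ Z, Z ≅ Z/F (SUFDQ_k). -/
set_option synthInstance.maxHeartbeats 1000000
set_option maxHeartbeats 1000000


open Module

/-- A bounded operator between (semi)normed spaces is *Fredholm of index `k`* if it has closed
range, finite-dimensional kernel and finite-dimensional cokernel, with
`dim ker - dim coker = k`. -/
def IsFredholmOfIndex {V W : Type*} [SeminormedAddCommGroup V] [NormedSpace ℂ V]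
    [SeminormedAddCommGroup W] [NormedSpace ℂ W] (T : V →L[ℂ] W) (k : ℤ) : Prop :=
  IsClosed (LinearMap.range (T : V →ₗ[ℂ] W) : Set W) ∧ FiniteDimensional ℂ (LinearMap.ker (T : V →ₗ[ℂ] W)) ∧
    FiniteDimensional ℂ (W ⧸ LinearMap.range (T : V →ₗ[ℂ] W)) ∧
    (finrank ℂ (LinearMap.ker (T : V →ₗ[ℂ] W)) : ℤ) - finrank ℂ (W ⧸ LinearMap.range (T : V →ₗ[ℂ] W)) = k

section Aux

variable {X : Type*} [NormedAddCommGroup X] [NormedSpace ℂ X]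

/-- The continuous linear version of `Submodule.comapSubtypeEquivOfLe`. -/
noncomputable def comapSubtypeCLE {U W : Submodule ℂ X} (h : U ≤ W) :
    ↥(U.comap W.subtype) ≃L[ℂ] ↥U :=
  { Submodule.comapSubtypeEquivOfLe h with
    continuous_toFun := by
      exact Continuous.subtype_mk (continuous_subtype_val.comp continuous_subtype_val) _
    continuous_invFun := by
      exact Continuous.subtype_mk (Continuous.subtype_mk continuous_subtype_val _) _ }

/-- A closed finite-codimensional subspace of a Banach space splits off continuously. -/
theorem aux_split [CompleteSpace X] (U : Submodule ℂ X) (hU : IsClosed (U : Set X))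
    [FiniteDimensional ℂ (X ⧸ U)] : Nonempty (X ≃L[ℂ] (↥U × (X ⧸ U))) := by
  haveI : IsClosed (U : Set X) := hU
  obtain ⟨G, hG⟩ := Submodule.exists_isCompl U
  have eG : (X ⧸ U) ≃ₗ[ℂ] ↥G := U.quotientEquivOfIsCompl G hG
  haveI : FiniteDimensional ℂ ↥G := eG.finiteDimensional
  have hGc : IsClosed (G : Set X) := Submodule.closed_of_finiteDimensional G
  have e1 := Submodule.prodEquivOfClosedCompl U G hG hU hGc
  exact ⟨e1.symm.trans ((ContinuousLinearEquiv.refl ℂ ↥U).prodCongr eG.symm.toContinuousLinearEquiv)⟩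

variable {Y : Type*} [AddCommGroup Y] [Module ℂ Y]

theorem aux_fd {U W : Submodule ℂ Y} (h : U ≤ W) [FiniteDimensional ℂ (Y ⧸ U)] :
    FiniteDimensional ℂ (↥W ⧸ U.comap W.subtype) := by
  set φ : ↥W →ₗ[ℂ] Y ⧸ U := U.mkQ.comp W.subtype with hφ
  have hker : LinearMap.ker φ = U.comap W.subtype := by
    rw [hφ, LinearMap.ker_comp, Submodule.ker_mkQ]
  have e := φ.quotKerEquivRange
  rw [hker] at e
  exact e.symm.finiteDimensional

theorem aux_rank {U W : Submodule ℂ Y} (h : U ≤ W) [FiniteDimensional ℂ (Y ⧸ U)] :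
    finrank ℂ (↥W ⧸ U.comap W.subtype) + finrank ℂ (Y ⧸ W) = finrank ℂ (Y ⧸ U) := by
  set φ : ↥W →ₗ[ℂ] Y ⧸ U := U.mkQ.comp W.subtype with hφ
  have hker : LinearMap.ker φ = U.comap W.subtype := by
    rw [hφ, LinearMap.ker_comp, Submodule.ker_mkQ]
  have hrange : LinearMap.range φ = W.map U.mkQ := by
    rw [hφ, LinearMap.range_comp, Submodule.range_subtype]
  have e := φ.quotKerEquivRange
  rw [hker, hrange] at e
  have h1 : finrank ℂ (↥W ⧸ U.comap W.subtype) = finrank ℂ (W.map U.mkQ) := e.finrank_eq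
  have h2 := Submodule.finrank_quotient_add_finrank (W.map U.mkQ)
  have h3 : finrank ℂ ((Y ⧸ U) ⧸ (W.map U.mkQ)) = finrank ℂ (Y ⧸ W) :=
    (Submodule.quotientQuotientEquivQuotient U W h).finrank_eq
  omega

/-- Two closed subspaces of a Banach space with the same finite codimension are
continuously isomorphic. -/
theorem aux_isoOfCodimEq [CompleteSpace X] (W W' : Submodule ℂ X)
    (hW : IsClosed (W : Set X)) (hW' : IsClosed (W' : Set X))
    [FiniteDimensional ℂ (X ⧸ W)] [FiniteDimensional ℂ (X ⧸ W')]
    (hrk : finrank ℂ (X ⧸ W) = finrank ℂ (X ⧸ W')) :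
    Nonempty (↥W ≃L[ℂ] ↥W') := by
  set U : Submodule ℂ X := W ⊓ W' with hU
  have hUW : U ≤ W := inf_le_left
  have hUW' : U ≤ W' := inf_le_right
  -- `X ⧸ U` is finite dimensional
  set ψ : (X ⧸ U) →ₗ[ℂ] (X ⧸ W) × (X ⧸ W') :=
    (U.mapQ W LinearMap.id (by rw [Submodule.comap_id]; exact hUW)).prod
      (U.mapQ W' LinearMap.id (by rw [Submodule.comap_id]; exact hUW')) with hψ
  have hinj : Function.Injective ψ := by
    rw [← LinearMap.ker_eq_bot, Submodule.eq_bot_iff]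
    intro x hx
    obtain ⟨z, rfl⟩ := Submodule.Quotient.mk_surjective U x
    have hx' : ψ (Submodule.Quotient.mk z) = 0 := hx
    rw [hψ] at hx'
    simp only [LinearMap.prod_apply, Function.prod, Submodule.mapQ_apply, LinearMap.id_apply,
      Prod.mk_eq_zero] at hx'
    rw [Submodule.Quotient.mk_eq_zero]
    exact Submodule.mem_inf.mpr ⟨(Submodule.Quotient.mk_eq_zero W).mp hx'.1,
      (Submodule.Quotient.mk_eq_zero W').mp hx'.2⟩
  haveI : FiniteDimensional ℂ (X ⧸ U) := FiniteDimensional.of_injective ψ hinj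
  haveI := aux_fd hUW
  haveI := aux_fd hUW'
  have r1 := aux_rank hUW
  have r2 := aux_rank hUW'
  have hq : finrank ℂ (↥W ⧸ U.comap W.subtype) = finrank ℂ (↥W' ⧸ U.comap W'.subtype) := by
    omega
  have hUc : IsClosed (U : Set X) := by
    rw [hU]; rw [Submodule.coe_inf]; exact hW.inter hW'
  haveI := hW.completeSpace_coe
  haveI := hW'.completeSpace_coe
  have hUWc : IsClosed ((U.comap W.subtype : Submodule ℂ ↥W) : Set ↥W) :=
    hUc.preimage continuous_subtype_val
  have hUW'c : IsClosed ((U.comap W'.subtype : Submodule ℂ ↥W') : Set ↥W') :=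
    hUc.preimage continuous_subtype_val
  haveI : IsClosed ((U.comap W.subtype : Submodule ℂ ↥W) : Set ↥W) := hUWc
  haveI : IsClosed ((U.comap W'.subtype : Submodule ℂ ↥W') : Set ↥W') := hUW'c
  obtain ⟨e1⟩ := aux_split (U.comap W.subtype) hUWc
  obtain ⟨e2⟩ := aux_split (U.comap W'.subtype) hUW'c
  have eq : (↥W ⧸ U.comap W.subtype) ≃L[ℂ] (↥W' ⧸ U.comap W'.subtype) :=
    (LinearEquiv.ofFinrankEq _ _ hq).toContinuousLinearEquiv
  exact ⟨e1.trans ((((comapSubtypeCLE hUW).trans (comapSubtypeCLE hUW').symm).prodCongr eq).trans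
    e2.symm)⟩

end Aux

/-- If a Banach space `Z` is SUFDS_k (isomorphic to `Z ⊕ F` for every
`k`-dimensional Banach space `F`), then `Z` is SUFDQ_k (isomorphic to `Z/F` for every
`k`-dimensional subspace `F ⊆ Z`). -/
theorem sufds_imp_sufdq (Z : Type u) [NormedAddCommGroup Z] [NormedSpace ℂ Z] [CompleteSpace Z]
    (k : ℕ) (hk : 0 < k)
    (hSUFDS : ∀ (F : Type u) [NormedAddCommGroup F] [NormedSpace ℂ F] [CompleteSpace F]
      [FiniteDimensional ℂ F], finrank ℂ F = k → Nonempty (Z ≃L[ℂ] (Z × F)))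
    (F : Submodule ℂ Z) (hF : finrank ℂ F = k) :
    Nonempty (Z ≃L[ℂ] (Z ⧸ F)) := by
  haveI hFfd : FiniteDimensional ℂ ↥F := FiniteDimensional.of_finrank_pos (hF ▸ hk)
  have hFc : IsClosed (F : Set Z) := Submodule.closed_of_finiteDimensional F
  haveI : IsClosed (F : Set Z) := hFc
  obtain ⟨e⟩ := hSUFDS ↥F hF
  -- a closed complement `W` of `F`
  obtain ⟨-, W, hWc, hcompl⟩ :=
    Submodule.closedComplemented_iff_isClosed_exists_isClosed_isCompl.mp
      (Submodule.ClosedComplemented.of_finiteDimensional F)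
  haveI := hWc.completeSpace_coe
  -- `W ≃L Z ⧸ F`
  have hcont : Continuous ⇑((Submodule.quotientEquivOfIsCompl F W hcompl).symm) := by
    have h : ⇑((Submodule.quotientEquivOfIsCompl F W hcompl).symm)
        = fun x : ↥W => (Submodule.Quotient.mk (x : Z) : Z ⧸ F) := by
      funext x; exact Submodule.quotientEquivOfIsCompl_symm_apply (p := F) (q := W) hcompl x
    rw [h]; exact continuous_quot_mk.comp continuous_subtype_val
  have eQF : ↥W ≃L[ℂ] (Z ⧸ F) :=
    (Submodule.quotientEquivOfIsCompl F W hcompl).symm.toContinuousLinearEquivOfContinuous hcont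
  -- the subspace `W' = e⁻¹ (Z × 0)`, continuously isomorphic to `Z`
  set j : Z →ₗ[ℂ] Z := e.symm.toLinearEquiv.toLinearMap.comp (LinearMap.inl ℂ Z ↥F) with hj
  have hjinj : Function.Injective j := e.symm.injective.comp LinearMap.inl_injective
  set W' : Submodule ℂ Z := LinearMap.range j with hW'def
  have hW'eq : W' = (LinearMap.ker (LinearMap.snd ℂ Z ↥F)).map e.symm.toLinearEquiv.toLinearMap := by
    rw [hW'def, hj, LinearMap.range_comp, LinearMap.range_inl]
  have hkerc : IsClosed ((LinearMap.ker (LinearMap.snd ℂ Z ↥F) : Submodule ℂ (Z × ↥F)) :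
      Set (Z × ↥F)) := by
    have h : ((LinearMap.ker (LinearMap.snd ℂ Z ↥F) : Submodule ℂ (Z × ↥F)) : Set (Z × ↥F))
        = Prod.snd ⁻¹' {(0 : ↥F)} := by
      ext x; simp [LinearMap.mem_ker]
    rw [h]; exact isClosed_singleton.preimage continuous_snd
  have hW'c : IsClosed (W' : Set Z) := by
    rw [hW'eq, Submodule.map_coe]
    exact e.symm.toHomeomorph.isClosedMap _ hkerc
  haveI := hW'c.completeSpace_coe
  have hjc : Continuous j := by
    have h : ⇑j = fun z => e.symm (z, 0) := rfl
    rw [h]; exact e.symm.continuous.comp (continuous_id.prodMk continuous_const)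
  have hc2 : Continuous ⇑(LinearEquiv.ofInjective j hjinj) := by
    apply continuous_induced_rng.mpr
    have h : (Subtype.val ∘ ⇑(LinearEquiv.ofInjective j hjinj)) = ⇑j := by
      funext z; exact LinearEquiv.ofInjective_apply j z
    rw [h]; exact hjc
  have eZW' : Z ≃L[ℂ] ↥W' :=
    (LinearEquiv.ofInjective j hjinj).toContinuousLinearEquivOfContinuous hc2
  -- dimensions of the quotients
  haveI : FiniteDimensional ℂ (Z ⧸ W) :=
    (Submodule.quotientEquivOfIsCompl W F hcompl.symm).symm.finiteDimensional
  have hrW : finrank ℂ (Z ⧸ W) = k := by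
    rw [(Submodule.quotientEquivOfIsCompl W F hcompl.symm).finrank_eq, hF]
  have hmap : W'.map (e.toLinearEquiv : Z →ₗ[ℂ] Z × ↥F) = LinearMap.ker (LinearMap.snd ℂ Z ↥F) := by
    rw [hW'eq, ← Submodule.map_comp]
    simp
  have hsndsurj : Function.Surjective (LinearMap.snd ℂ Z ↥F) := fun y => ⟨(0, y), rfl⟩
  have eqQ : (Z ⧸ W') ≃ₗ[ℂ] ↥F :=
    (Submodule.Quotient.equiv W' (LinearMap.ker (LinearMap.snd ℂ Z ↥F)) e.toLinearEquiv hmap).trans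
      ((LinearMap.snd ℂ Z ↥F).quotKerEquivOfSurjective hsndsurj)
  haveI : FiniteDimensional ℂ (Z ⧸ W') := eqQ.symm.finiteDimensional
  have hrW' : finrank ℂ (Z ⧸ W') = k := by rw [eqQ.finrank_eq, hF]
  obtain ⟨eWW'⟩ := aux_isoOfCodimEq W W' hWc hW'c (hrW.trans hrW'.symm)
  exact ⟨eZW'.trans (eWW'.symm.trans eQF)⟩
end

section
/- Let Z be a Banach space and k > 0 an integer. Z is isomorphic to Z ⊕ F for every k-dimensional Banach space F if and only if there exists a Fredholm operator in B(Z) of index k. -/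
open Module

/-- Continuous linear version of `LinearEquiv.prodAssoc`. -/
def cLEProdAssoc (R A B C : Type*) [Semiring R] [AddCommMonoid A] [AddCommMonoid B]
    [AddCommMonoid C] [Module R A] [Module R B] [Module R C] [TopologicalSpace A]
    [TopologicalSpace B] [TopologicalSpace C] : (A × (B × C)) ≃L[R] ((A × B) × C) :=
  { (LinearEquiv.prodAssoc R A B C).symm with
    continuous_toFun := by
      exact (continuous_fst.prodMk (continuous_fst.comp continuous_snd)).prodMk
        (continuous_snd.comp continuous_snd)
    continuous_invFun := by
      exact (continuous_fst.comp continuous_fst).prodMk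
        ((continuous_snd.comp continuous_fst).prodMk continuous_snd) }

/-- A Banach space `Z` is isomorphic to `Z ⊕ F` for every `k`-dimensional Banach
space `F` if and only if there exists a Fredholm operator on `Z` of index `k`. -/
theorem sufds_iff_exists_fredholm (Z : Type u) [NormedAddCommGroup Z] [NormedSpace ℂ Z]
    [CompleteSpace Z] (k : ℕ) (hk : 0 < k) :
    (∀ (F : Type u) [NormedAddCommGroup F] [NormedSpace ℂ F] [CompleteSpace F]
      [FiniteDimensional ℂ F], finrank ℂ F = k → Nonempty (Z ≃L[ℂ] (Z × F)))
    ↔ ∃ T : Z →L[ℂ] Z, IsFredholmOfIndex T (k : ℤ) := by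
  constructor
  · intro h
    -- instantiate with `F = ULift (Fin k → ℂ)`
    set F : Type u := ULift.{u} (Fin k → ℂ) with hFdef
    haveI : FiniteDimensional ℂ F := Module.Finite.equiv (ULift.moduleEquiv).symm
    have hF : finrank ℂ F = k := by
      show finrank ℂ (ULift.{u} (Fin k → ℂ)) = k
      rw [finrank_ulift, finrank_fintype_fun_eq_card, Fintype.card_fin]
    obtain ⟨e⟩ := h F hF
    set T : Z →L[ℂ] Z := (ContinuousLinearMap.fst ℂ Z F).comp (e : Z →L[ℂ] Z × F) with hT
    have hTapp : ∀ x, T x = (e x).1 := fun x => rfl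
    have hrange : LinearMap.range (T : Z →ₗ[ℂ] Z) = ⊤ := by
      rw [LinearMap.range_eq_top]
      intro z
      exact ⟨e.symm (z, 0), by simp [hTapp]⟩
    -- kernel of T is linearly equivalent to F
    have hkerT : LinearMap.ker (T : Z →ₗ[ℂ] Z) = (LinearMap.ker ((LinearMap.fst ℂ Z F))).comap
        (e : Z →ₗ[ℂ] Z × F) := rfl
    have eker : (LinearMap.ker (T : Z →ₗ[ℂ] Z)) ≃ₗ[ℂ] F := by
      have e1 : (LinearMap.ker (T : Z →ₗ[ℂ] Z)) ≃ₗ[ℂ]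
          ((LinearMap.ker ((LinearMap.fst ℂ Z F))).comap (e : Z →ₗ[ℂ] Z × F)) :=
        LinearEquiv.ofEq _ _ hkerT
      have e2 : ((LinearMap.ker ((LinearMap.fst ℂ Z F))).comap (e : Z →ₗ[ℂ] Z × F)) ≃ₗ[ℂ]
          (LinearMap.ker ((LinearMap.fst ℂ Z F))) :=
        LinearEquiv.ofSubmodule' e.toLinearEquiv _
      have e3 : (LinearMap.ker ((LinearMap.fst ℂ Z F))) ≃ₗ[ℂ] F :=
      { toFun := fun x => (x : Z × F).2
        map_add' := fun _ _ => rfl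
        map_smul' := fun _ _ => rfl
        invFun := fun f => ⟨(0, f), by simp [LinearMap.mem_ker]⟩
        left_inv := fun x => by
          have hx : (x : Z × F).1 = 0 := x.2
          ext
          · exact hx.symm
          · rfl
        right_inv := fun f => rfl }
      exact (e1.trans e2).trans e3
    haveI : FiniteDimensional ℂ (LinearMap.ker (T : Z →ₗ[ℂ] Z)) := eker.symm.finiteDimensional
    haveI : Subsingleton (Z ⧸ LinearMap.range (T : Z →ₗ[ℂ] Z)) :=
      Submodule.Quotient.subsingleton_iff.2 hrange
    refine ⟨T, ?_, inferInstance, inferInstance, ?_⟩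
    · rw [hrange]; exact isClosed_univ
    · rw [eker.finrank_eq, hF, finrank_zero_of_subsingleton]
      simp
  · rintro ⟨T, hcl, hker, hcoker, hidx⟩
    intro F _ _ _ _ hF
    set N := LinearMap.ker (T : Z →ₗ[ℂ] Z) with hN
    set R := LinearMap.range (T : Z →ₗ[ℂ] Z) with hR
    haveI : FiniteDimensional ℂ N := hker
    haveI : FiniteDimensional ℂ (Z ⧸ R) := hcoker
    -- closed complements
    obtain ⟨N₁, hN₁closed, hN₁compl⟩ :=
      (Submodule.ClosedComplemented.of_finiteDimensional N).exists_isClosed_isCompl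
    obtain ⟨W, hWclosed, hWcompl⟩ :=
      (Submodule.ClosedComplemented.of_quotient_finiteDimensional hcl).exists_isClosed_isCompl
    haveI : FiniteDimensional ℂ W := (R.quotientEquivOfIsCompl W hWcompl).finiteDimensional
    have hWrank : finrank ℂ W = finrank ℂ (Z ⧸ R) :=
      (R.quotientEquivOfIsCompl W hWcompl).finrank_eq.symm
    haveI : CompleteSpace N₁ := hN₁closed.completeSpace_coe
    haveI : CompleteSpace R := hcl.completeSpace_coe
    -- T restricts to an isomorphism N₁ ≃L R
    set S : N₁ →L[ℂ] R :=
      (T.comp N₁.subtypeL).codRestrict R (fun x => LinearMap.mem_range_self _ _) with hS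
    have hSapp : ∀ x : N₁, (S x : Z) = T x := fun x => rfl
    have hSker : LinearMap.ker (S : N₁ →ₗ[ℂ] R) = ⊥ := by
      rw [LinearMap.ker_eq_bot']
      intro x hx
      have hx0 : T (x : Z) = 0 := by
        have := congrArg (fun y : R => (y : Z)) hx
        simpa [hSapp] using this
      have hmem : (x : Z) ∈ N ⊓ N₁ := Submodule.mem_inf.2 ⟨hx0, x.2⟩
      rw [hN₁compl.inf_eq_bot, Submodule.mem_bot] at hmem
      exact Subtype.ext hmem
    have hSrange : LinearMap.range (S : N₁ →ₗ[ℂ] R) = ⊤ := by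
      rw [LinearMap.range_eq_top]
      rintro ⟨y, x, rfl⟩
      obtain ⟨n, n₁, hnN, hn₁, hx⟩ := Submodule.codisjoint_iff_exists_add_eq.mp
        hN₁compl.codisjoint x
      refine ⟨⟨n₁, hn₁⟩, ?_⟩
      apply Subtype.ext
      show T n₁ = T x
      have hTn : T n = 0 := hnN
      calc T n₁ = T (n + n₁) := by rw [map_add, hTn, zero_add]
        _ = T x := by rw [hx]
    set eS : N₁ ≃L[ℂ] R := ContinuousLinearEquiv.ofBijective S hSker hSrange
    -- the two product decompositions of Z
    set eZN : (N × N₁) ≃L[ℂ] Z := N.prodEquivOfClosedCompl N₁ hN₁compl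
      N.closed_of_finiteDimensional hN₁closed
    set eZR : (R × W) ≃L[ℂ] Z := R.prodEquivOfClosedCompl W hWcompl hcl hWclosed
    -- finite-dimensional identification N ≃L (W × F)
    have hNrank : finrank ℂ N = finrank ℂ (W × F) := by
      have h1 : (finrank ℂ N : ℤ) = finrank ℂ (Z ⧸ R) + k := by omega
      have h2 : finrank ℂ N = finrank ℂ (Z ⧸ R) + k := by exact_mod_cast h1
      rw [h2, Module.finrank_prod, hWrank, hF]
    set eNWF : N ≃L[ℂ] (W × F) :=
      (LinearEquiv.ofFinrankEq _ _ hNrank).toContinuousLinearEquiv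
    -- assemble: Z ≃ N × N₁ ≃ (W × F) × N₁ ≃ (N₁ × W) × F ≃ (R × W) × F ≃ Z × F
    refine ⟨eZN.symm.trans <| (eNWF.prodCongr (ContinuousLinearEquiv.refl ℂ N₁)).trans ?_⟩
    refine (ContinuousLinearEquiv.prodComm ℂ _ _).trans ?_
    refine (cLEProdAssoc ℂ N₁ W F).trans ?_
    exact ((eS.prodCongr (ContinuousLinearEquiv.refl ℂ W)).trans eZR).prodCongr
      (ContinuousLinearEquiv.refl ℂ F)
end

section
/- Let V be a Banach space and Z₁, Z₂ finite-dimensional Banach spaces with dim Z₂ ≥ dim Z₁. If B(V) contains a surjective Fredholm operator of index dim Z₂ − dim Z₁, then V ⊕ Z₁ is isomorphic to V ⊕ Z₂. -/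
open Module

/-- If `dim Z₂ ≥ dim Z₁` and `B(V)` contains a surjective Fredholm operator of
index `dim Z₂ - dim Z₁`, then `V ⊕ Z₁ ≅ V ⊕ Z₂`. -/
theorem iso_of_surjective_fredholm (V : Type u) [NormedAddCommGroup V] [NormedSpace ℂ V]
    [CompleteSpace V]
    (Z₁ : Type u) [NormedAddCommGroup Z₁] [NormedSpace ℂ Z₁] [FiniteDimensional ℂ Z₁]
    (Z₂ : Type u) [NormedAddCommGroup Z₂] [NormedSpace ℂ Z₂] [FiniteDimensional ℂ Z₂]
    (hdim : finrank ℂ Z₁ ≤ finrank ℂ Z₂)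
    (F : V →L[ℂ] V) (hsurj : Function.Surjective F)
    (hF : IsFredholmOfIndex F ((finrank ℂ Z₂ : ℤ) - finrank ℂ Z₁)) :
    Nonempty ((V × Z₁) ≃L[ℂ] (V × Z₂)) := by
  obtain ⟨-, hker, hcoker, hidx⟩ := hF
  set K : Submodule ℂ V := LinearMap.ker (F : V →ₗ[ℂ] V) with hK
  -- the cokernel is trivial since F is surjective
  have hrange : LinearMap.range (F : V →ₗ[ℂ] V) = ⊤ := LinearMap.range_eq_top.mpr hsurj
  have hcok0 : finrank ℂ (V ⧸ LinearMap.range (F : V →ₗ[ℂ] V)) = 0 := by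
    rw [hrange]
    have : Subsingleton (V ⧸ (⊤ : Submodule ℂ V)) :=
      Submodule.Quotient.subsingleton_iff.mpr rfl
    exact finrank_zero_of_subsingleton
  have hdimK : finrank ℂ K + finrank ℂ Z₁ = finrank ℂ Z₂ := by
    rw [hcok0] at hidx
    omega
  -- projection onto the finite-dimensional kernel
  obtain ⟨p, hp⟩ := (Submodule.ClosedComplemented.of_finiteDimensional (𝕜 := ℂ) K)
  have hgrange : LinearMap.range (p : V →ₗ[ℂ] K) = ⊤ := by
    rw [LinearMap.range_eq_top]
    intro y
    exact ⟨y, hp y⟩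
  have hcompl : IsCompl (LinearMap.ker (F : V →ₗ[ℂ] V)) (LinearMap.ker (p : V →ₗ[ℂ] K)) :=
    LinearMap.isCompl_of_proj hp
  -- V ≃ K × V via F and p
  let e : V ≃L[ℂ] V × K := ContinuousLinearMap.equivProdOfSurjectiveOfIsCompl F p hrange
    hgrange hcompl
  -- K × Z₁ ≃ Z₂
  let e₂ : (K × Z₁) ≃L[ℂ] Z₂ := ContinuousLinearEquiv.ofFinrankEq (by
    rw [finrank_prod, hdimK])
  exact ⟨(e.prodCongr (ContinuousLinearEquiv.refl ℂ Z₁)).trans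
    ((LinearIsometryEquiv.prodAssoc ℂ V K Z₁).toContinuousLinearEquiv.trans
      ((ContinuousLinearEquiv.refl ℂ V).prodCongr e₂))⟩
end

section
/- Let V and W be Banach spaces, and let K = { I_V − B₁B₂ : B₁ ∈ B(W,V), B₂ ∈ B(V,W) }. Then K = B(V) if and only if V is isomorphic to a complemented subspace of W. Moreover K = B(V) if and only if 0 ∈ K. -/
open Module

/-- The set `K = { I_V - B₁B₂ : B₁ ∈ B(W,V), B₂ ∈ B(V,W) }`. -/
def opSet (V W : Type u) [NormedAddCommGroup V] [NormedSpace ℂ V]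
    [NormedAddCommGroup W] [NormedSpace ℂ W] : Set (V →L[ℂ] V) :=
  {X | ∃ (B₁ : W →L[ℂ] V) (B₂ : V →L[ℂ] W), X = ContinuousLinearMap.id ℂ V - B₁.comp B₂}

lemma aux_zero_mem_iff (V : Type u) [NormedAddCommGroup V] [NormedSpace ℂ V]
    (W : Type u) [NormedAddCommGroup W] [NormedSpace ℂ W] :
    (0 : V →L[ℂ] V) ∈ opSet V W ↔
      ∃ N : Submodule ℂ W, N.ClosedComplemented ∧ Nonempty (V ≃L[ℂ] N) := by
  constructor
  · rintro ⟨B₁, B₂, h⟩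
    have hI : ∀ x, B₁ (B₂ x) = x := by
      intro x
      have h0 := congrArg (fun T : V →L[ℂ] V => T x) h
      have : x - B₁ (B₂ x) = 0 := by simpa using h0.symm
      have := eq_of_sub_eq_zero this
      exact this.symm
    refine ⟨LinearMap.range (B₂ : V →ₗ[ℂ] W), ?_, ?_⟩
    · refine ⟨(B₂.comp B₁).codRestrict (LinearMap.range (B₂ : V →ₗ[ℂ] W)) (fun w => ⟨B₁ w, rfl⟩), ?_⟩
      rintro ⟨w, v, rfl⟩
      ext
      exact congrArg B₂ (hI v)
    · refine ⟨ContinuousLinearEquiv.equivOfInverse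
        (B₂.codRestrict (LinearMap.range (B₂ : V →ₗ[ℂ] W)) (fun x => ⟨x, rfl⟩))
        (B₁.comp (LinearMap.range (B₂ : V →ₗ[ℂ] W)).subtypeL) (fun x => hI x) ?_⟩
      rintro ⟨w, v, rfl⟩
      ext
      simp [hI]
  · rintro ⟨N, ⟨f, hf⟩, ⟨e⟩⟩
    refine ⟨(e.symm : N →L[ℂ] V).comp f, N.subtypeL.comp (e : V →L[ℂ] N), ?_⟩
    ext x
    simp [hf (e x)]

/-- `K = B(V)` iff `V` is isomorphic to a complemented subspace of `W`;
moreover `K = B(V)` iff `0 ∈ K`. -/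
theorem opSet_eq_univ_iff (V : Type u) [NormedAddCommGroup V] [NormedSpace ℂ V] [CompleteSpace V]
    (W : Type u) [NormedAddCommGroup W] [NormedSpace ℂ W] [CompleteSpace W] :
    (opSet V W = Set.univ ↔
      ∃ N : Submodule ℂ W, N.ClosedComplemented ∧ Nonempty (V ≃L[ℂ] N)) ∧
    (opSet V W = Set.univ ↔ (0 : V →L[ℂ] V) ∈ opSet V W) := by
  have h2 : opSet V W = Set.univ ↔ (0 : V →L[ℂ] V) ∈ opSet V W := by
    constructor
    · intro h; rw [h]; trivial
    · rintro ⟨B₁, B₂, h⟩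
      have hI : ∀ x, B₁ (B₂ x) = x := by
        intro x
        have h0 := congrArg (fun T : V →L[ℂ] V => T x) h
        have : x - B₁ (B₂ x) = 0 := by simpa using h0.symm
        exact (eq_of_sub_eq_zero this).symm
      ext X
      simp only [Set.mem_univ, iff_true]
      refine ⟨B₁, B₂.comp (ContinuousLinearMap.id ℂ V - X), ?_⟩
      ext x
      simp [hI]
  exact ⟨h2.trans (aux_zero_mem_iff V W), h2⟩
end

section
/- Let U ∈ B(X) and V ∈ B(Y) be relatively regular Banach space operators (complemented kernels, closed complemented ranges). If ker U ≅ ker V and coker U ≅ coker V (complements of the ranges are isomorphic), then U and V are equivalent after extension: there exist Banach spaces X₀, Y₀ and invertible operators E : Y ⊕ Y₀ → X ⊕ X₀ and F : X ⊕ X₀ → Y ⊕ Y₀ such that diag(U, I_{X₀}) = E · diag(V, I_{Y₀}) · F. -/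
open Module

/-- Product associativity as a continuous linear equivalence. -/
noncomputable def pAssoc (A B C : Type*) [NormedAddCommGroup A] [NormedSpace ℂ A]
    [NormedAddCommGroup B] [NormedSpace ℂ B] [NormedAddCommGroup C] [NormedSpace ℂ C] :
    ((A × B) × C) ≃L[ℂ] (A × (B × C)) :=
  { LinearEquiv.prodAssoc ℂ A B C with
    continuous_toFun := by
      show Continuous fun p : (A × B) × C => (p.1.1, (p.1.2, p.2))
      fun_prop
    continuous_invFun := by
      show Continuous fun p : A × (B × C) => ((p.1, p.2.1), p.2.2)
      fun_prop }

@[simp] theorem pAssoc_apply {A B C : Type*} [NormedAddCommGroup A] [NormedSpace ℂ A]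
    [NormedAddCommGroup B] [NormedSpace ℂ B] [NormedAddCommGroup C] [NormedSpace ℂ C]
    (p : (A × B) × C) : pAssoc A B C p = (p.1.1, (p.1.2, p.2)) := rfl

@[simp] theorem pAssoc_symm_apply {A B C : Type*} [NormedAddCommGroup A] [NormedSpace ℂ A]
    [NormedAddCommGroup B] [NormedSpace ℂ B] [NormedAddCommGroup C] [NormedSpace ℂ C]
    (p : A × (B × C)) : (pAssoc A B C).symm p = ((p.1, p.2.1), p.2.2) := rfl

@[simp] theorem prodEquivOfClosedCompl_apply' {E : Type*} [NormedAddCommGroup E] [NormedSpace ℂ E]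
    [CompleteSpace E] {p q : Submodule ℂ E} (h : IsCompl p q) (hp : IsClosed (p : Set E))
    (hq : IsClosed (q : Set E)) (x : p × q) :
    p.prodEquivOfClosedCompl q h hp hq x = (x.1 : E) + x.2 := rfl

/-- Two relatively regular operators (complemented kernels and closed
complemented ranges) with isomorphic kernels and isomorphic cokernels (complements of the
ranges) are equivalent after extension. -/
theorem eae_of_relatively_regular (X : Type) [NormedAddCommGroup X] [NormedSpace ℂ X]
    [CompleteSpace X] (Y : Type) [NormedAddCommGroup Y] [NormedSpace ℂ Y] [CompleteSpace Y]
    (U : X →L[ℂ] X) (V : Y →L[ℂ] Y)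
    (hUker : (LinearMap.ker (U : X →ₗ[ℂ] X)).ClosedComplemented)
    (hUran : IsClosed (LinearMap.range (U : X →ₗ[ℂ] X) : Set X) ∧ (LinearMap.range (U : X →ₗ[ℂ] X)).ClosedComplemented)
    (hVker : (LinearMap.ker (V : Y →ₗ[ℂ] Y)).ClosedComplemented)
    (hVran : IsClosed (LinearMap.range (V : Y →ₗ[ℂ] Y) : Set Y) ∧ (LinearMap.range (V : Y →ₗ[ℂ] Y)).ClosedComplemented)
    (hker : Nonempty ((LinearMap.ker (U : X →ₗ[ℂ] X)) ≃L[ℂ] (LinearMap.ker (V : Y →ₗ[ℂ] Y))))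
    (hcoker : ∃ (Xc : Submodule ℂ X) (Yc : Submodule ℂ Y),
      IsCompl (LinearMap.range (U : X →ₗ[ℂ] X)) Xc ∧ IsCompl (LinearMap.range (V : Y →ₗ[ℂ] Y)) Yc ∧
      IsClosed (Xc : Set X) ∧ IsClosed (Yc : Set Y) ∧ Nonempty (Xc ≃L[ℂ] Yc)) :
    ∃ (X₀ : Type) (_ : NormedAddCommGroup X₀) (_ : NormedSpace ℂ X₀) (_ : CompleteSpace X₀)
      (Y₀ : Type) (_ : NormedAddCommGroup Y₀) (_ : NormedSpace ℂ Y₀) (_ : CompleteSpace Y₀)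
      (E : (Y × Y₀) ≃L[ℂ] (X × X₀)) (F : (X × X₀) ≃L[ℂ] (Y × Y₀)),
      U.prodMap (ContinuousLinearMap.id ℂ X₀) =
        ((E : (Y × Y₀) →L[ℂ] (X × X₀)).comp
          ((V.prodMap (ContinuousLinearMap.id ℂ Y₀)).comp
            (F : (X × X₀) →L[ℂ] (Y × Y₀)))) := by
  classical
  obtain ⟨hRc, -⟩ := hUran
  obtain ⟨hSc, -⟩ := hVran
  obtain ⟨Xc, Yc, hcX, hcY, hXcc, hYcc, ⟨ψ⟩⟩ := hcoker
  obtain ⟨φ⟩ := hker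
  obtain ⟨X₁, hX₁c, hX₁⟩ := hUker.exists_isClosed_isCompl
  obtain ⟨Y₁, hY₁c, hY₁⟩ := hVker.exists_isClosed_isCompl
  haveI := hX₁c.completeSpace_coe
  haveI := hY₁c.completeSpace_coe
  haveI := hRc.completeSpace_coe
  haveI := hSc.completeSpace_coe
  -- the restriction of U to X₁, as a map onto its range
  set R := LinearMap.range (U : X →ₗ[ℂ] X) with hR
  set S := LinearMap.range (V : Y →ₗ[ℂ] Y) with hS
  let Uc : ↥X₁ →L[ℂ] ↥R := (U.comp X₁.subtypeL).codRestrict R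
    (fun x => LinearMap.mem_range_self _ _)
  have hUc_apply : ∀ x : X₁, (Uc x : X) = U (x : X) := fun x => rfl
  have hUcinj : LinearMap.ker (Uc : ↥X₁ →ₗ[ℂ] ↥R) = ⊥ := by
    rw [eq_bot_iff]
    rintro x hx
    have hx0 : U (x : X) = 0 := by
      have := congrArg (Subtype.val) (LinearMap.mem_ker.mp hx)
      simpa [hUc_apply] using this
    have : (x : X) ∈ LinearMap.ker (U : X →ₗ[ℂ] X) ⊓ X₁ := ⟨LinearMap.mem_ker.mpr hx0, x.2⟩
    rw [hX₁.inf_eq_bot] at this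
    simp only [Submodule.mem_bot]
    exact Subtype.ext (by simpa using this)
  have hUcsurj : LinearMap.range (Uc : ↥X₁ →ₗ[ℂ] ↥R) = ⊤ := by
    rw [eq_top_iff]
    rintro ⟨y, x, rfl⟩ -
    have hx : x ∈ LinearMap.ker (U : X →ₗ[ℂ] X) ⊔ X₁ := by rw [hX₁.sup_eq_top]; trivial
    obtain ⟨k, hk, x₁, hx₁, hsum⟩ := Submodule.mem_sup.mp hx
    refine ⟨⟨x₁, hx₁⟩, ?_⟩
    apply Subtype.ext
    have : U x = U x₁ := by
      rw [← hsum, map_add, show U k = 0 from LinearMap.mem_ker.mp hk, zero_add]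
    simpa [hUc_apply] using this.symm
  let Vc : ↥Y₁ →L[ℂ] ↥S := (V.comp Y₁.subtypeL).codRestrict S
    (fun x => LinearMap.mem_range_self _ _)
  have hVc_apply : ∀ x : Y₁, (Vc x : Y) = V (x : Y) := fun x => rfl
  have hVcinj : LinearMap.ker (Vc : ↥Y₁ →ₗ[ℂ] ↥S) = ⊥ := by
    rw [eq_bot_iff]
    rintro x hx
    have hx0 : V (x : Y) = 0 := by
      have := congrArg (Subtype.val) (LinearMap.mem_ker.mp hx)
      simpa [hVc_apply] using this
    have : (x : Y) ∈ LinearMap.ker (V : Y →ₗ[ℂ] Y) ⊓ Y₁ := ⟨LinearMap.mem_ker.mpr hx0, x.2⟩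
    rw [hY₁.inf_eq_bot] at this
    simp only [Submodule.mem_bot]
    exact Subtype.ext (by simpa using this)
  have hVcsurj : LinearMap.range (Vc : ↥Y₁ →ₗ[ℂ] ↥S) = ⊤ := by
    rw [eq_top_iff]
    rintro ⟨y, x, rfl⟩ -
    have hx : x ∈ LinearMap.ker (V : Y →ₗ[ℂ] Y) ⊔ Y₁ := by rw [hY₁.sup_eq_top]; trivial
    obtain ⟨k, hk, x₁, hx₁, hsum⟩ := Submodule.mem_sup.mp hx
    refine ⟨⟨x₁, hx₁⟩, ?_⟩
    apply Subtype.ext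
    have : V x = V x₁ := by
      rw [← hsum, map_add, show V k = 0 from LinearMap.mem_ker.mp hk, zero_add]
    simpa [hVc_apply] using this.symm
  let U' : ↥X₁ ≃L[ℂ] ↥R := ContinuousLinearEquiv.ofBijective Uc hUcinj hUcsurj
  let V' : ↥Y₁ ≃L[ℂ] ↥S := ContinuousLinearEquiv.ofBijective Vc hVcinj hVcsurj
  have hU'_apply : ∀ x : X₁, (U' x : X) = U (x : X) := fun x => rfl
  have hV'_apply : ∀ x : Y₁, (V' x : Y) = V (x : Y) := fun x => rfl
  -- decompositions
  let dK : (↥(LinearMap.ker (U : X →ₗ[ℂ] X)) × ↥X₁) ≃L[ℂ] X :=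
    (LinearMap.ker (U : X →ₗ[ℂ] X)).prodEquivOfClosedCompl X₁ hX₁ (ContinuousLinearMap.isClosed_ker U) hX₁c
  let dL : (↥(LinearMap.ker (V : Y →ₗ[ℂ] Y)) × ↥Y₁) ≃L[ℂ] Y :=
    (LinearMap.ker (V : Y →ₗ[ℂ] Y)).prodEquivOfClosedCompl Y₁ hY₁ (ContinuousLinearMap.isClosed_ker V) hY₁c
  let dC : (↥R × ↥Xc) ≃L[ℂ] X := R.prodEquivOfClosedCompl Xc hcX hRc hXcc
  let dD : (↥S × ↥Yc) ≃L[ℂ] Y := S.prodEquivOfClosedCompl Yc hcY hSc hYcc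
  -- middle equivalences
  let MF : ((↥(LinearMap.ker (U : X →ₗ[ℂ] X)) × ↥X₁) × ↥Y₁) ≃L[ℂ] ((↥(LinearMap.ker (V : Y →ₗ[ℂ] Y)) × ↥Y₁) × ↥X₁) :=
    (((pAssoc _ _ _).trans
      ((ContinuousLinearEquiv.refl ℂ _).prodCongr (ContinuousLinearEquiv.prodComm ℂ _ _))).trans
      (pAssoc _ _ _).symm).trans
      ((φ.prodCongr (ContinuousLinearEquiv.refl ℂ _)).prodCongr (ContinuousLinearEquiv.refl ℂ _))
  let ME : ((↥S × ↥Yc) × ↥X₁) ≃L[ℂ] ((↥R × ↥Xc) × ↥Y₁) :=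
    (((pAssoc _ _ _).trans (ContinuousLinearEquiv.prodComm ℂ _ _)).trans
      ((ψ.symm.prodCongr U').prodCongr V'.symm)).trans
      ((ContinuousLinearEquiv.prodComm ℂ _ _).prodCongr (ContinuousLinearEquiv.refl ℂ _))
  let F : (X × ↥Y₁) ≃L[ℂ] (Y × ↥X₁) :=
    ((dK.symm.prodCongr (ContinuousLinearEquiv.refl ℂ ↥Y₁)).trans MF).trans
      (dL.prodCongr (ContinuousLinearEquiv.refl ℂ ↥X₁))
  let E : (Y × ↥X₁) ≃L[ℂ] (X × ↥Y₁) :=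
    ((dD.symm.prodCongr (ContinuousLinearEquiv.refl ℂ ↥X₁)).trans ME).trans
      (dC.prodCongr (ContinuousLinearEquiv.refl ℂ ↥Y₁))
  refine ⟨↥Y₁, inferInstance, inferInstance, inferInstance,
    ↥X₁, inferInstance, inferInstance, inferInstance, E, F, ?_⟩
  refine ContinuousLinearMap.ext fun p => ?_
  obtain ⟨x, w⟩ := p
  -- decompose x along ker U ⊕ X₁
  set k : ↥(LinearMap.ker (U : X →ₗ[ℂ] X)) := (dK.symm x).1 with hk
  set x₁ : ↥X₁ := (dK.symm x).2 with hx₁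
  have hdKsymm : dK.symm x = (k, x₁) := rfl
  have hxsum : x = (k : X) + (x₁ : X) := by
    conv_lhs => rw [← dK.apply_symm_apply x, hdKsymm]
    simp [dK]
  have hFx : F (x, w) = (↑(φ k) + (w : Y), x₁) := by
    simp only [F, MF, ContinuousLinearEquiv.trans_apply, ContinuousLinearEquiv.prodCongr_apply,
      hdKsymm, pAssoc_apply, pAssoc_symm_apply, ContinuousLinearEquiv.refl_apply,
      ContinuousLinearEquiv.prodComm_apply, Prod.swap]
    simp [dL]
  have hVker_φ : V ↑(φ k) = 0 := (φ k).2
  have hVmid : V (↑(φ k) + (w : Y)) = V (w : Y) := by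
    rw [map_add, hVker_φ, zero_add]
  have hVw_mem : V (w : Y) ∈ S := LinearMap.mem_range_self _ _
  have hdDsymm : dD.symm (V (w : Y)) = (⟨V (w : Y), hVw_mem⟩, 0) := by
    rw [ContinuousLinearEquiv.symm_apply_eq]
    simp [dD]
  have hV'symm : V'.symm ⟨V (w : Y), hVw_mem⟩ = w := by
    rw [ContinuousLinearEquiv.symm_apply_eq]
    exact Subtype.ext (hV'_apply w).symm
  have hEy : E (V (w : Y), x₁) = (U x, w) := by
    simp only [E, ME, ContinuousLinearEquiv.trans_apply, ContinuousLinearEquiv.prodCongr_apply,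
      hdDsymm, pAssoc_apply, ContinuousLinearEquiv.refl_apply,
      ContinuousLinearEquiv.prodComm_apply, Prod.swap, map_zero, hV'symm]
    have hUx : U x = (U' x₁ : X) := by
      rw [hxsum, map_add, show U (k : X) = 0 from LinearMap.mem_ker.mp k.2, zero_add, hU'_apply]
    simp [dC, hUx]
  show (U x, w) = E ((V.prodMap (ContinuousLinearMap.id ℂ ↥X₁)) (F (x, w)))
  rw [hFx]
  show (U x, w) = E (V (↑(φ k) + (w : Y)), x₁)
  rw [hVmid, hEy]
end
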